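/- Concentration connectivity theorem (matrix form): suppose F(v(e, S)) = 0 defines S = S(e) implicitly, where the m×m matrix (∂F/∂v)(∂v/∂S) and the n×n matrix ∂v/∂e are invertible. Then (∂S/∂e)(∂v/∂e)⁻¹(∂v/∂S) = −I_m, where all Jacobians are evaluated at (e, S(e)) with S treated as independent in ∂v/∂e and ∂v/∂S. -/

import Mathlib

open Matrix

noncomputable def toM {a b : ℕ} (f : (Fin a → ℝ) →L[ℝ] (Fin b → ℝ)) :
    Matrix (Fin b) (Fin a) ℝ :=
  Matrix.of fun i j => f (Pi.single j 1) i

lemma toM_mulVec {a b : ℕ} (f : (Fin a → ℝ) →L[ℝ] (Fin b → ℝ)) (x : Fin a → ℝ) :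
    toM f *ᵥ x = f x := by
  funext i
  have hx : x = ∑ j, x j • (Pi.single j 1 : Fin a → ℝ) := by
    funext k
    simp [Finset.sum_apply, Pi.single_apply]
  conv_rhs => rw [hx]
  simp [toM, Matrix.mulVec, dotProduct, Finset.sum_apply, mul_comm]

lemma toM_comp {a b c : ℕ} (f : (Fin b → ℝ) →L[ℝ] (Fin c → ℝ))
    (g : (Fin a → ℝ) →L[ℝ] (Fin b → ℝ)) :
    toM (f.comp g) = toM f * toM g := by
  ext i j
  have := congrFun (toM_mulVec f (g (Pi.single j 1))) i
  simp only [toM, Matrix.mulVec, dotProduct] at this ⊢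
  simp [Matrix.mul_apply, ← this]

lemma fderiv_proj {a b : ℕ} (g : (Fin a → ℝ) → (Fin b → ℝ)) (y : Fin a → ℝ)
    (hg : DifferentiableAt ℝ g y) (i : Fin b) (u : Fin a → ℝ) :
    fderiv ℝ (fun x => g x i) y u = fderiv ℝ g y u i := by
  have h : HasFDerivAt (fun x => g x i)
      ((ContinuousLinearMap.proj i : (Fin b → ℝ) →L[ℝ] ℝ).comp (fderiv ℝ g y)) y := by
    exact ((ContinuousLinearMap.proj i).hasFDerivAt).comp y hg.hasFDerivAt
  rw [h.fderiv]
  rfl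


/-- Concentration connectivity theorem in matrix form:
`(∂S/∂e)(∂v/∂e)⁻¹(∂v/∂S) = −I`. -/
theorem concentration_connectivity {n m : ℕ}
    (v : (Fin n → ℝ) → (Fin m → ℝ) → (Fin n → ℝ))
    (F : (Fin n → ℝ) → (Fin m → ℝ))
    (hv : ContDiff ℝ 1 (fun p : (Fin n → ℝ) × (Fin m → ℝ) => v p.1 p.2))
    (hF : ContDiff ℝ 1 F)
    (S : (Fin n → ℝ) → (Fin m → ℝ))
    (hS : Differentiable ℝ S)
    (hFS : ∀ e, F (v e (S e)) = 0)
    (hinvFS : ∀ e, IsUnit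
      ((Matrix.of fun (i : Fin m) (k : Fin n) =>
          fderiv ℝ F (v e (S e)) (Pi.single k 1) i) *
       (Matrix.of fun (k : Fin n) (j : Fin m) =>
          fderiv ℝ (fun s => v e s k) (S e) (Pi.single j 1))))
    (hinvvE : ∀ e, IsUnit (Matrix.of fun k l : Fin n =>
      fderiv ℝ (fun e' => v e' (S e) k) e (Pi.single l 1))) :
    ∀ e,
      (Matrix.of fun (i : Fin m) (l : Fin n) =>
          fderiv ℝ (fun e' => S e' i) e (Pi.single l 1)) *
      (Matrix.of fun k l : Fin n =>
          fderiv ℝ (fun e' => v e' (S e) k) e (Pi.single l 1))⁻¹ *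
      (Matrix.of fun (k : Fin n) (j : Fin m) =>
          fderiv ℝ (fun s => v e s k) (S e) (Pi.single j 1))
      = -(1 : Matrix (Fin m) (Fin m) ℝ) := by
  intro e
  -- differentiability facts
  have hvd : Differentiable ℝ (fun p : (Fin n → ℝ) × (Fin m → ℝ) => v p.1 p.2) :=
    hv.differentiable one_ne_zero
  have hFd : Differentiable ℝ F := hF.differentiable one_ne_zero
  have hvp : DifferentiableAt ℝ (fun p : (Fin n → ℝ) × (Fin m → ℝ) => v p.1 p.2) (e, S e) :=
    hvd _
  set Dv := fderiv ℝ (fun p : (Fin n → ℝ) × (Fin m → ℝ) => v p.1 p.2) (e, S e) with hDv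
  set DS := fderiv ℝ S e with hDS
  set A' := fderiv ℝ F (v e (S e)) with hA'
  set Ve' := fderiv ℝ (fun e' => v e' (S e)) e with hVe'
  set Vs' := fderiv ℝ (fun s => v e s) (S e) with hVs'
  -- partial derivatives as compositions
  have hveD : HasFDerivAt (fun e' => v e' (S e))
      (Dv.comp ((ContinuousLinearMap.id ℝ (Fin n → ℝ)).prod 0)) e := by
    have h1 : HasFDerivAt (fun e' : Fin n → ℝ => (e', S e))
        ((ContinuousLinearMap.id ℝ (Fin n → ℝ)).prod 0) e :=
      HasFDerivAt.prodMk (hasFDerivAt_id e) (hasFDerivAt_const (S e) e)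
    exact hvp.hasFDerivAt.comp e h1
  have hvsD : HasFDerivAt (fun s => v e s)
      (Dv.comp ((0 : (Fin m → ℝ) →L[ℝ] (Fin n → ℝ)).prod
        (ContinuousLinearMap.id ℝ (Fin m → ℝ)))) (S e) := by
    have h1 : HasFDerivAt (fun s : Fin m → ℝ => (e, s))
        ((0 : (Fin m → ℝ) →L[ℝ] (Fin n → ℝ)).prod (ContinuousLinearMap.id ℝ (Fin m → ℝ)))
        (S e) :=
      HasFDerivAt.prodMk (hasFDerivAt_const e (S e)) (hasFDerivAt_id (S e))
    exact hvp.hasFDerivAt.comp (S e) h1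
  have hVeEq : Ve' = Dv.comp ((ContinuousLinearMap.id ℝ (Fin n → ℝ)).prod 0) := by
    rw [hVe']; exact hveD.fderiv
  have hVsEq : Vs' = Dv.comp ((0 : (Fin m → ℝ) →L[ℝ] (Fin n → ℝ)).prod
      (ContinuousLinearMap.id ℝ (Fin m → ℝ))) := by
    rw [hVs']; exact hvsD.fderiv
  -- chain rule on F (v e' (S e')) = 0
  have hinner : HasFDerivAt (fun e' : Fin n → ℝ => (e', S e'))
      ((ContinuousLinearMap.id ℝ (Fin n → ℝ)).prod DS) e :=
    HasFDerivAt.prodMk (hasFDerivAt_id e) (hS e).hasFDerivAt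
  have hcomp : HasFDerivAt (fun e' => F (v e' (S e')))
      (A'.comp (Dv.comp ((ContinuousLinearMap.id ℝ (Fin n → ℝ)).prod DS))) e := by
    have h2 : HasFDerivAt (fun e' => v e' (S e'))
        (Dv.comp ((ContinuousLinearMap.id ℝ (Fin n → ℝ)).prod DS)) e :=
      by have := hvp.hasFDerivAt.comp e hinner; exact this
    exact (hFd _).hasFDerivAt.comp e h2
  have hzero : A'.comp (Dv.comp ((ContinuousLinearMap.id ℝ (Fin n → ℝ)).prod DS)) = 0 := by
    have h4 : (fun e' => F (v e' (S e'))) = fun _ : Fin n → ℝ => (0 : Fin m → ℝ) :=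
      funext hFS
    rw [h4] at hcomp
    exact hcomp.unique (hasFDerivAt_const _ _)
  -- key pointwise identity
  have key : ∀ u : Fin n → ℝ, A' (Ve' u) + A' (Vs' (DS u)) = 0 := by
    intro u
    have h0 : A' (Dv (u, DS u)) = 0 := by
      have := congrArg (fun L : (Fin n → ℝ) →L[ℝ] (Fin m → ℝ) => L u) hzero
      simpa using this
    have hsplit : (u, DS u) = ((u, 0) : (Fin n → ℝ) × (Fin m → ℝ)) + (0, DS u) := by
      simp
    rw [hVeEq, hVsEq]
    simp only [ContinuousLinearMap.comp_apply, ContinuousLinearMap.prod_apply,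
      ContinuousLinearMap.id_apply, ContinuousLinearMap.zero_apply]
    rw [← map_add A', ← map_add Dv, ← hsplit, h0]
  -- matrices
  have hSdiff : ∀ i : Fin m, DifferentiableAt ℝ (fun e' => S e' i) e := fun i =>
    ((ContinuousLinearMap.proj i : (Fin m → ℝ) →L[ℝ] ℝ).differentiableAt).comp e (hS e)
  have hSeM : (Matrix.of fun (i : Fin m) (l : Fin n) =>
      fderiv ℝ (fun e' => S e' i) e (Pi.single l 1)) = toM DS := by
    ext i l
    exact fderiv_proj S e (hS e) i (Pi.single l 1)
  have hVeM : (Matrix.of fun k l : Fin n =>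
      fderiv ℝ (fun e' => v e' (S e) k) e (Pi.single l 1)) = toM Ve' := by
    ext k l
    exact fderiv_proj (fun e' => v e' (S e)) e hveD.differentiableAt k (Pi.single l 1)
  have hVsM : (Matrix.of fun (k : Fin n) (j : Fin m) =>
      fderiv ℝ (fun s => v e s k) (S e) (Pi.single j 1)) = toM Vs' := by
    ext k j
    exact fderiv_proj (fun s => v e s) (S e) hvsD.differentiableAt k (Pi.single j 1)
  have hAM : (Matrix.of fun (i : Fin m) (k : Fin n) =>
      fderiv ℝ F (v e (S e)) (Pi.single k 1) i) = toM A' := rfl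
  rw [hSeM, hVeM, hVsM]
  have hinv1 : IsUnit (toM A' * toM Vs') := by rw [← hAM, ← hVsM]; exact hinvFS e
  have hinv2 : IsUnit (toM Ve') := by rw [← hVeM]; exact hinvvE e
  -- main matrix equation
  have hmain : toM A' * toM Vs' * toM DS = -(toM A' * toM Ve') := by
    rw [← toM_comp, ← toM_comp, ← toM_comp]
    ext i l
    have := congrFun (key (Pi.single l 1)) i
    simp only [toM, Matrix.of_apply, ContinuousLinearMap.comp_apply, Matrix.neg_apply]
    simp only [Pi.add_apply, Pi.zero_apply] at this
    linarith
  have hVeInv : toM Ve' * (toM Ve')⁻¹ = 1 :=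
    Matrix.mul_nonsing_inv _ ((Matrix.isUnit_iff_isUnit_det _).mp hinv2)
  have hu : Invertible (toM A' * toM Vs') := hinv1.invertible
  have key2 : (toM A' * toM Vs') * (toM DS * (toM Ve')⁻¹ * toM Vs')
      = (toM A' * toM Vs') * (-1) := by
    calc (toM A' * toM Vs') * (toM DS * (toM Ve')⁻¹ * toM Vs')
        = (toM A' * toM Vs' * toM DS) * ((toM Ve')⁻¹ * toM Vs') := by
          simp only [Matrix.mul_assoc]
      _ = -(toM A' * (toM Ve' * ((toM Ve')⁻¹ * toM Vs'))) := by
          rw [hmain]; simp only [Matrix.neg_mul, Matrix.mul_assoc]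
      _ = -(toM A' * toM Vs') := by rw [← Matrix.mul_assoc (toM Ve'), hVeInv, Matrix.one_mul]
      _ = (toM A' * toM Vs') * (-1) := by simp
  calc toM DS * (toM Ve')⁻¹ * toM Vs'
      = ⅟(toM A' * toM Vs') * ((toM A' * toM Vs') * (toM DS * (toM Ve')⁻¹ * toM Vs')) :=
        (invOf_mul_cancel_left _ _).symm
    _ = ⅟(toM A' * toM Vs') * ((toM A' * toM Vs') * (-1)) := by rw [key2]
    _ = -1 := invOf_mul_cancel_left _ _
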